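/- Let α : V × V → W be a bilinear map whose image spans W, and let T : W → W be a linear map such that α(X,Y) = T(α(JX,Y)) for all X,Y ∈ V. Then T² = −I. -/
import Mathlib

open Module

/-- if the image of `α` spans `W` and `α(X,Y) = T(α(JX,Y))` for all
`X, Y`, then `T² = -I`. -/
theorem stmt11 {V W : Type*} [AddCommGroup V] [Module ℝ V] [FiniteDimensional ℝ V]
    [AddCommGroup W] [Module ℝ W] [FiniteDimensional ℝ W]
    (J : V →ₗ[ℝ] V) (hJ : ∀ v : V, J (J v) = -v)
    (α : V →ₗ[ℝ] V →ₗ[ℝ] W)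
    (hspan : Submodule.span ℝ {w : W | ∃ X Y : V, α X Y = w} = ⊤)
    (T : W →ₗ[ℝ] W)
    (hT : ∀ X Y : V, α X Y = T (α (J X) Y)) :
    ∀ w : W, T (T w) = -w := by
  have key : (T ∘ₗ T : W →ₗ[ℝ] W) = -LinearMap.id := by
    apply LinearMap.ext_on hspan
    rintro w ⟨X, Y, rfl⟩
    have h1 : α (J X) Y = -T (α X Y) := by
      have := hT (J X) Y
      rw [hJ, map_neg, LinearMap.neg_apply, map_neg] at this
      exact this
    have h2 := hT X Y
    rw [h1, map_neg] at h2
    simp only [LinearMap.comp_apply, LinearMap.neg_apply, LinearMap.id_apply]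
    rw [eq_comm, neg_eq_iff_eq_neg] at h2; rw [h2]
  intro w
  have := congrFun (congrArg DFunLike.coe key) w
  simpa using this
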